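/- (Separation of rays and tangent segments in the plane.) Let j ≥ 0 be an integer, set h = (1/2)^{(3/2)^{j+1}}, and let t ∈ [0, (1/2)^{(3/2)^j}], s ∈ [1,2], γ > 0. If t + s = γ(t + h + 1), then γ((t+h)² + 2(t+h)) > t² + 2ts. Consequently, the ray L_{1, t+h} = {γ(t + h + 1, (t+h)² + 2(t+h)) : γ > 0} is disjoint from the segment L_{2,t} = {σ(1, 2t) + (t+1, t² + 2t) : σ ∈ [0,1]}. -/

import Mathlib

open Set

noncomputable section

/-- `(1/2)^{(3/2)^j}`, the length scale at step `j`. -/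
def lscale (j : ℕ) : ℝ := ((1:ℝ)/2) ^ (((3:ℝ)/2) ^ j)

lemma lscale_pos (j : ℕ) : 0 < lscale j := by
  unfold lscale; positivity

lemma lscale_sq_lt (j : ℕ) : (lscale j) ^ 2 < lscale (j+1) := by
  unfold lscale
  rw [← Real.rpow_natCast (((1:ℝ)/2) ^ (((3:ℝ)/2) ^ j)) 2,
    ← Real.rpow_mul (by norm_num)]
  apply Real.rpow_lt_rpow_of_exponent_gt (by norm_num) (by norm_num)
  have hp : (0:ℝ) < ((3:ℝ)/2) ^ j := by positivity
  rw [pow_succ]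
  push_cast
  nlinarith

/-- **Separation of rays and tangent segments in the plane.** With
`h = (1/2)^{(3/2)^{j+1}}`: if `t ∈ [0, (1/2)^{(3/2)^j}]`, `s ∈ [1,2]`, `γ > 0` and
`t + s = γ(t + h + 1)`, then `γ((t+h)² + 2(t+h)) > t² + 2ts`; consequently the ray
`L_{1,t+h}` is disjoint from the segment `L_{2,t}`. -/
theorem ray_segment_separation (j : ℕ) :
    (∀ t s γ : ℝ, t ∈ Icc (0:ℝ) (lscale j) → s ∈ Icc (1:ℝ) 2 → 0 < γ →
      t + s = γ * (t + lscale (j+1) + 1) →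
      γ * ((t + lscale (j+1)) ^ 2 + 2 * (t + lscale (j+1))) > t ^ 2 + 2 * t * s) ∧
    (∀ t ∈ Icc (0:ℝ) (lscale j),
      Disjoint
        {q : ℝ × ℝ | ∃ γ : ℝ, 0 < γ ∧
          q = (γ * (t + lscale (j+1) + 1),
               γ * ((t + lscale (j+1)) ^ 2 + 2 * (t + lscale (j+1))))}
        {q : ℝ × ℝ | ∃ σ ∈ Icc (0:ℝ) 1,
          q = (σ * 1 + (t + 1), σ * (2 * t) + (t ^ 2 + 2 * t))}) := by
  have key : ∀ t s γ : ℝ, t ∈ Icc (0:ℝ) (lscale j) → s ∈ Icc (1:ℝ) 2 → 0 < γ →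
      t + s = γ * (t + lscale (j+1) + 1) →
      γ * ((t + lscale (j+1)) ^ 2 + 2 * (t + lscale (j+1))) > t ^ 2 + 2 * t * s := by
    intro t s γ ht hs hγ heq
    set h := lscale (j+1) with hh
    have hpos : 0 < h := lscale_pos (j+1)
    have hT : t ^ 2 < h := by
      have h1 := lscale_sq_lt j
      nlinarith [ht.1, ht.2, lscale_pos j]
    have hden : 0 < t + h + 1 := by nlinarith [ht.1]
    rw [gt_iff_lt, ← mul_lt_mul_iff_of_pos_right hden]
    have hrw : γ * ((t + h) ^ 2 + 2 * (t + h)) * (t + h + 1)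
        = (γ * (t + h + 1)) * ((t + h) ^ 2 + 2 * (t + h)) := by ring
    rw [hrw, ← heq]
    nlinarith [mul_nonneg (sub_nonneg.2 hs.2) (sq_nonneg t),
      mul_nonneg (sub_nonneg.2 hs.1) hpos.le,
      mul_nonneg (sq_nonneg t) hpos.le,
      mul_nonneg ht.1 hpos.le,
      mul_nonneg ht.1 (sq_nonneg h),
      mul_nonneg (by linarith [hs.1] : (0:ℝ) ≤ s) (sq_nonneg h),
      hT, sq_nonneg t]
  refine ⟨key, ?_⟩
  intro t ht
  rw [Set.disjoint_left]
  rintro q ⟨γ, hγ, rfl⟩ ⟨σ, hσ, habs⟩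
  have h1 : γ * (t + lscale (j+1) + 1) = σ * 1 + (t + 1) := congrArg Prod.fst habs
  have h2 : γ * ((t + lscale (j+1)) ^ 2 + 2 * (t + lscale (j+1)))
      = σ * (2 * t) + (t ^ 2 + 2 * t) := congrArg Prod.snd habs
  have hs : σ + 1 ∈ Icc (1:ℝ) 2 := ⟨by linarith [hσ.1], by linarith [hσ.2]⟩
  have heq : t + (σ + 1) = γ * (t + lscale (j+1) + 1) := by linarith
  have := key t (σ + 1) γ ht hs hγ heq
  nlinarith
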